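/- For every field K and every n ≥ 1, the set K̃ₙ of elements admitting an adequate set of cardinality at most n has cardinality at most (n+1)^(n²+n+1). Consequently K̃ is countable. -/

import Mathlib

/-- A finite set `A` is adequate for `r`: it contains `r`, and every map `f`
preserving `1` (when `1 ∈ A`) and preserving sums/products lying in `A` fixes `r`. -/
def Adequate {K : Type*} [Field K] (A : Finset K) (r : K) : Prop :=
  r ∈ A ∧ ∀ f : K → K,
    ((1 : K) ∈ A → f 1 = 1) →
    (∀ a b : K, a ∈ A → b ∈ A → a + b ∈ A → f (a + b) = f a + f b) →
    (∀ a b : K, a ∈ A → b ∈ A → a * b ∈ A → f (a * b) = f a * f b) →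
    f r = r

open Classical in
noncomputable def encA {K : Type*} [Field K] (m : ℕ) (r : K) (A : Finset K) :
    Fin (m+1) → K :=
  fun j => (r :: (A.erase r).toList).getD j r

open Classical in
lemma encA_zero {K : Type*} [Field K] (m : ℕ) (r : K) (A : Finset K) :
    encA m r A 0 = r := rfl

open Classical in
lemma encA_surj {K : Type*} [Field K] {m : ℕ} {r : K} {A : Finset K}
    (hr : r ∈ A) (hcard : A.card ≤ m + 1) {x : K} (hx : x ∈ A) :
    ∃ j : Fin (m+1), encA m r A j = x := by
  rcases eq_or_ne x r with rfl | hne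
  · exact ⟨0, rfl⟩
  · have hx' : x ∈ (A.erase r).toList := by
      simp [Finset.mem_toList, Finset.mem_erase, hne, hx]
    obtain ⟨p, hp, hget⟩ := List.getElem_of_mem hx'
    have hlen : (A.erase r).toList.length = A.card - 1 := by
      simp [Finset.length_toList, Finset.card_erase_of_mem hr]
    have hplt : p + 1 < m + 1 := by omega
    refine ⟨⟨p+1, hplt⟩, ?_⟩
    simp only [encA]
    rw [List.getD_cons_succ, List.getD_eq_getElem _ _ hp, hget]

noncomputable def encIdx {K : Type*} [Field K] (m : ℕ) (r : K) (A : Finset K)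
    (x : K) : Fin (m+1) :=
  letI := Classical.dec
  if h : (Finset.univ.filter (fun j => encA m r A j = x)).Nonempty
  then (Finset.univ.filter (fun j => encA m r A j = x)).min' h else 0

lemma encA_encIdx {K : Type*} [Field K] {m : ℕ} {r : K} {A : Finset K} {x : K}
    (h : ∃ j : Fin (m+1), encA m r A j = x) :
    encA m r A (encIdx m r A x) = x := by
  classical
  obtain ⟨j, hj⟩ := h
  have hne : (Finset.univ.filter (fun j => encA m r A j = x)).Nonempty :=
    ⟨j, by simp [hj]⟩
  have := Finset.min'_mem _ hne
  simp only [Finset.mem_filter] at this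
  simp only [encIdx]
  rw [dif_pos hne]
  convert this.2 using 2

lemma encIdx_r {K : Type*} [Field K] (m : ℕ) (r : K) (A : Finset K) :
    encIdx m r A r = 0 := by
  classical
  have hne : (Finset.univ.filter (fun j => encA m r A j = r)).Nonempty :=
    ⟨0, by simp [encA_zero]⟩
  have h0 : (0 : Fin (m+1)) ∈ Finset.univ.filter (fun j => encA m r A j = r) := by
    simp [encA_zero]
  simp only [encIdx]
  rw [dif_pos hne]
  exact le_antisymm (Finset.min'_le _ _ h0) (Fin.zero_le _)

open Classical in
noncomputable def encCode {K : Type*} [Field K] (m : ℕ) (r : K) (A : Finset K) :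
    (Sym2 (Fin (m+1)) → Option (Fin (m+1))) ×
      (Sym2 (Fin (m+1)) → Option (Fin (m+1))) × Option (Fin (m+1)) :=
  ⟨Sym2.lift ⟨fun j k => if encA m r A j + encA m r A k ∈ A then
        some (encIdx m r A (encA m r A j + encA m r A k)) else none,
      fun j k => by simp only []; rw [add_comm (encA m r A j)]⟩,
   Sym2.lift ⟨fun j k => if encA m r A j * encA m r A k ∈ A then
        some (encIdx m r A (encA m r A j * encA m r A k)) else none,
      fun j k => by simp only []; rw [mul_comm (encA m r A j)]⟩,
   if (1:K) ∈ A then some (encIdx m r A 1) else none⟩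

lemma encCode_inj {K : Type*} [Field K] {m : ℕ} {r₁ r₂ : K} {A₁ A₂ : Finset K}
    (h₁ : A₁.card ≤ m+1) (had₁ : Adequate A₁ r₁)
    (h₂ : A₂.card ≤ m+1) (had₂ : Adequate A₂ r₂)
    (h : encCode m r₁ A₁ = encCode m r₂ A₂) : r₁ = r₂ := by
  classical
  set a₁ := encA m r₁ A₁ with ha₁
  set a₂ := encA m r₂ A₂ with ha₂
  have surj₁ : ∀ {x}, x ∈ A₁ → a₁ (encIdx m r₁ A₁ x) = x :=
    fun hx => encA_encIdx (encA_surj had₁.1 h₁ hx)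
  have surj₂ : ∀ {x}, x ∈ A₂ → a₂ (encIdx m r₂ A₂ x) = x :=
    fun hx => encA_encIdx (encA_surj had₂.1 h₂ hx)
  set f : K → K := fun x => if x ∈ A₁ then a₂ (encIdx m r₁ A₁ x) else x with hf
  have hadd : ∀ a b : K, a ∈ A₁ → b ∈ A₁ → a + b ∈ A₁ → f (a + b) = f a + f b := by
    intro a b ha hb hab
    have hcong := congrFun (congrArg Prod.fst h) s(encIdx m r₁ A₁ a, encIdx m r₁ A₁ b)
    simp only [encCode, Sym2.lift_mk, ← ha₁, ← ha₂, surj₁ ha, surj₁ hb] at hcong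
    rw [if_pos hab] at hcong
    by_cases h2 : a₂ (encIdx m r₁ A₁ a) + a₂ (encIdx m r₁ A₁ b) ∈ A₂
    · rw [if_pos h2] at hcong
      have := surj₂ h2
      rw [← Option.some_inj.mp hcong] at this
      simp only [hf, if_pos ha, if_pos hb, if_pos hab]
      exact this
    · rw [if_neg h2] at hcong
      exact absurd hcong (by simp)
  have hmul : ∀ a b : K, a ∈ A₁ → b ∈ A₁ → a * b ∈ A₁ → f (a * b) = f a * f b := by
    intro a b ha hb hab
    have hcong := congrFun (congrArg (fun p => p.2.1) h) s(encIdx m r₁ A₁ a, encIdx m r₁ A₁ b)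
    simp only [encCode, Sym2.lift_mk, ← ha₁, ← ha₂, surj₁ ha, surj₁ hb] at hcong
    rw [if_pos hab] at hcong
    by_cases h2 : a₂ (encIdx m r₁ A₁ a) * a₂ (encIdx m r₁ A₁ b) ∈ A₂
    · rw [if_pos h2] at hcong
      have := surj₂ h2
      rw [← Option.some_inj.mp hcong] at this
      simp only [hf, if_pos ha, if_pos hb, if_pos hab]
      exact this
    · rw [if_neg h2] at hcong
      exact absurd hcong (by simp)
  have hone : (1:K) ∈ A₁ → f 1 = 1 := by
    intro h1
    have hcong := congrArg (fun p => p.2.2) h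
    simp only [encCode] at hcong
    rw [if_pos h1] at hcong
    by_cases h2 : (1:K) ∈ A₂
    · rw [if_pos h2] at hcong
      have := surj₂ h2
      rw [← Option.some_inj.mp hcong] at this
      simp only [hf, if_pos h1]
      exact this
    · rw [if_neg h2] at hcong
      exact absurd hcong (by simp)
  have := had₁.2 f hone hadd hmul
  have hfr : f r₁ = r₂ := by
    simp only [hf, if_pos had₁.1, encIdx_r]
    exact encA_zero m r₂ A₂
  rw [hfr] at this
  exact this.symm

lemma main_bound {K : Type*} [Field K] (m : ℕ) :
    ({r : K | ∃ A : Finset K, A.card ≤ m + 1 ∧ Adequate A r}).Finite ∧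
    ({r : K | ∃ A : Finset K, A.card ≤ m + 1 ∧ Adequate A r}).ncard ≤
      (m + 1 + 1) ^ ((m + 1) ^ 2 + (m + 1) + 1) := by
  classical
  set S := {r : K | ∃ A : Finset K, A.card ≤ m + 1 ∧ Adequate A r} with hS
  let T := (Sym2 (Fin (m+1)) → Option (Fin (m+1))) ×
      (Sym2 (Fin (m+1)) → Option (Fin (m+1))) × Option (Fin (m+1))
  have hmem : ∀ r : S, ∃ A : Finset K, A.card ≤ m + 1 ∧ Adequate A r.1 := fun r => r.2
  let F : S → T := fun r => encCode m r.1 (Classical.choose (hmem r))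
  have hF : Function.Injective F := by
    intro r₁ r₂ hEq
    obtain ⟨hc₁, ha₁⟩ := Classical.choose_spec (hmem r₁)
    obtain ⟨hc₂, ha₂⟩ := Classical.choose_spec (hmem r₂)
    exact Subtype.ext (encCode_inj hc₁ ha₁ hc₂ ha₂ hEq)
  have hfin : S.Finite := Set.finite_coe_iff.mp (Finite.of_injective F hF)
  refine ⟨hfin, ?_⟩
  have hcard : S.ncard ≤ Nat.card T := by
    rw [← Nat.card_coe_set_eq]
    exact Nat.card_le_card_of_injective F hF
  have hT : Nat.card T = (m + 1 + 1) ^ ((m + 1) ^ 2 + (m + 1) + 1) := by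
    have hsym2 : Fintype.card (Sym2 (Fin (m+1))) * 2 = (m + 2) * (m + 1) := by
      rw [Sym2.card, Fintype.card_fin, Nat.choose_two_right]
      have : (2:ℕ) ∣ (m + 1 + 1) * (m + 1 + 1 - 1) := by
        have := Nat.even_mul_succ_self (m+1)
        rw [mul_comm] at this
        simpa using this.two_dvd
      rw [Nat.div_mul_cancel this]
      congr 1 <;> omega
    set c := Fintype.card (Sym2 (Fin (m+1))) with hc
    have h1 : Nat.card T = (m + 2) ^ c * ((m + 2) ^ c * (m + 2)) := by
      simp [T, Nat.card_eq_fintype_card, Fintype.card_fun]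
      rfl
    have h2 : (m + 2) ^ c * ((m + 2) ^ c * (m + 2)) = (m + 2) ^ (c + c + 1) := by
      rw [← pow_succ, ← pow_add]
      congr 1
    have h5 : c * 2 = m * m + 3 * m + 2 := by rw [hsym2]; ring
    have h4 : (m + 1) ^ 2 = m * m + 2 * m + 1 := by ring
    have h3 : c + c + 1 = (m + 1) ^ 2 + (m + 1) + 1 := by omega
    rw [h1, h2, h3]
  rw [hT] at hcard
  exact hcard

theorem tilde_n_card_bound (K : Type*) [Field K] :
    (∀ n : ℕ, 1 ≤ n →
      ({r : K | ∃ A : Finset K, A.card ≤ n ∧ Adequate A r}).Finite ∧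
      ({r : K | ∃ A : Finset K, A.card ≤ n ∧ Adequate A r}).ncard ≤
        (n + 1) ^ (n ^ 2 + n + 1)) ∧
    ({r : K | ∃ A : Finset K, Adequate A r}).Countable := by
  constructor
  · intro n hn
    obtain ⟨m, rfl⟩ : ∃ m, n = m + 1 := ⟨n - 1, by omega⟩
    exact main_bound m
  · have hsub : {r : K | ∃ A : Finset K, Adequate A r} ⊆
        ⋃ n : ℕ, {r : K | ∃ A : Finset K, A.card ≤ n + 1 ∧ Adequate A r} := by
      rintro r ⟨A, hA⟩
      exact Set.mem_iUnion.mpr ⟨A.card, A, by omega, hA⟩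
    exact ((Set.countable_iUnion (fun n => (main_bound n).1.countable)).mono hsub)
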